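/- In inverse transform sampling, condition on the generated token y_i, its distribution μ_i, and the value k = π_i(y_i). Then u_i is uniform on the interval [μ_i({y : π_i(y) < k}), μ_i({y : π_i(y) ≤ k})], and hence E[u_i | y_i, π_i(y_i) = k] = μ_i(y_i)/2 + μ_i({y : π_i(y) < k}). -/

import Mathlib

open MeasureTheory ProbabilityTheory Finset

/-- The inverse transform sampler: `Γ((π,u), μ) = π⁻¹(min {π l : μ {j : π j ≤ π l} ≥ u})`.
(If the set is empty, which never happens for `u ≤ 1`, a default token is returned.) -/
noncomputable def invTransform {V : ℕ} [NeZero V] (π : Equiv.Perm (Fin V))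
    (μ : Fin V → ℝ) (u : ℝ) : Fin V :=
  π.symm
    (((Finset.univ.filter fun l : Fin V =>
        u ≤ ∑ j ∈ Finset.univ.filter fun j : Fin V => π j ≤ π l, μ j).image
          fun l => π l).min.untopD ⟨0, Nat.pos_of_ne_zero (NeZero.ne V)⟩)

lemma invTransform_eq_iff {V : ℕ} [NeZero V] (π : Equiv.Perm (Fin V))
    (μp : Fin V → ℝ) (hμ : ∀ k, 0 ≤ μp k) (hsum : ∑ k, μp k = 1)
    (y : Fin V) {u : ℝ} (hu : 0 < u) (hu1 : u ≤ 1) :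
    invTransform π μp u = y ↔
      (∑ z ∈ univ.filter fun z : Fin V => π z < π y, μp z) < u ∧
      u ≤ (∑ z ∈ univ.filter fun z : Fin V => π z < π y, μp z) + μp y := by
  obtain ⟨n, rfl⟩ : ∃ n, V = n + 1 := Nat.exists_eq_succ_of_ne_zero (NeZero.ne V)
  set S : Fin (n+1) → ℝ := fun k => ∑ j ∈ univ.filter fun j => π j ≤ k, μp j with hS
  set a : ℝ := ∑ z ∈ univ.filter fun z : Fin (n+1) => π z < π y, μp z with haa
  have hSmono : ∀ ⦃k k' : Fin (n+1)⦄, k ≤ k' → S k ≤ S k' := by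
    intro k k' hkk'
    apply Finset.sum_le_sum_of_subset_of_nonneg
    · intro j hj
      simp only [mem_filter, mem_univ, true_and] at hj ⊢
      exact hj.trans hkk'
    · intro i _ _; exact hμ i
  set F : Finset (Fin (n+1)) := univ.filter fun l => u ≤ S (π l) with hF
  have hmemF : ∀ l, l ∈ F ↔ u ≤ S (π l) := by intro l; simp [hF]
  have hSy : S (π y) = a + μp y := by
    have : (univ.filter fun j : Fin (n+1) => π j ≤ π y)
        = insert y (univ.filter fun j : Fin (n+1) => π j < π y) := by
      ext j
      simp only [mem_filter, mem_univ, true_and, mem_insert]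
      constructor
      · intro h
        rcases lt_or_eq_of_le h with h' | h'
        · exact Or.inr h'
        · exact Or.inl (π.injective h')
      · rintro (rfl | h)
        · exact le_rfl
        · exact le_of_lt h
    rw [hS]
    simp only [this]
    rw [Finset.sum_insert (by simp)]
    ring
  have hFne : F.Nonempty := by
    refine ⟨π.symm (Fin.last n), ?_⟩
    rw [hmemF]
    have : S (π (π.symm (Fin.last n))) = 1 := by
      rw [Equiv.apply_symm_apply, hS]
      simp only []
      rw [← hsum]
      apply Finset.sum_congr _ (fun _ _ => rfl)
      ext j; simp [Fin.le_last]
    rw [this]; exact hu1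
  set E := F.image (fun l => π l) with hE
  have hEne : E.Nonempty := hFne.image _
  set m := E.min' hEne with hm
  have hmin : invTransform π μp u = π.symm m := by
    rw [invTransform]
    congr 1
    rw [← Finset.coe_min' hEne]
    rfl
  have hmmem : m ∈ E := Finset.min'_mem _ _
  have hminle : ∀ k ∈ E, m ≤ k := fun k hk => Finset.min'_le _ _ hk
  have hiff : invTransform π μp u = y ↔ m = π y := by
    rw [hmin]
    constructor
    · intro h; rw [← h]; simp
    · intro h; rw [h]; simp
  rw [hiff]
  constructor
  · intro h
    -- m = π y
    have hyF : y ∈ F := by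
      rw [hE] at hmmem
      obtain ⟨l, hl, hlm⟩ := Finset.mem_image.mp hmmem
      have hl' : l = y := π.injective (by rw [hlm, h])
      rwa [hl'] at hl
    have hub : u ≤ a + μp y := by rw [← hSy]; exact (hmemF y).mp hyF
    refine ⟨?_, hub⟩
    by_contra hua
    push_neg at hua
    -- u ≤ a; the lower filter must be nonempty
    have hGne : (univ.filter fun z : Fin (n+1) => π z < π y).Nonempty := by
      by_contra hGe
      rw [Finset.not_nonempty_iff_eq_empty] at hGe
      have : a = 0 := by rw [haa, hGe, Finset.sum_empty]
      linarith
    set k := ((univ.filter fun z : Fin (n+1) => π z < π y).image fun z => π z).max' (hGne.image _) with hk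
    have hkmem : k ∈ (univ.filter fun z : Fin (n+1) => π z < π y).image fun z => π z := Finset.max'_mem _ _
    obtain ⟨z₀, hz₀, hz₀k⟩ := Finset.mem_image.mp hkmem
    have hklt : k < π y := by
      rw [← hz₀k]
      exact (Finset.mem_filter.mp hz₀).2
    have haSk : a ≤ S k := by
      rw [haa, hS]
      apply Finset.sum_le_sum_of_subset_of_nonneg
      · intro j hj
        simp only [mem_filter, mem_univ, true_and] at hj ⊢
        exact Finset.le_max' _ _ (by
          simp only [Finset.mem_image, mem_filter, mem_univ, true_and]
          exact ⟨j, hj, rfl⟩)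
      · intro i _ _; exact hμ i
    have hkE : k ∈ E := by
      rw [hE]
      refine Finset.mem_image.mpr ⟨π.symm k, ?_, by simp⟩
      rw [hmemF, Equiv.apply_symm_apply]
      exact hua.trans haSk
    have := hminle k hkE
    rw [h] at this
    exact absurd (this.trans_lt hklt) (lt_irrefl _)
  · rintro ⟨hau, hub⟩
    have hyF : y ∈ F := by
      rw [hmemF, hSy]; exact hub
    have hyE : π y ∈ E := Finset.mem_image.mpr ⟨y, hyF, rfl⟩
    have hmle : m ≤ π y := hminle _ hyE
    rcases lt_or_eq_of_le hmle with hlt | heq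
    · exfalso
      obtain ⟨l, hl, hlm⟩ := Finset.mem_image.mp hmmem
      have huSm : u ≤ S m := by rw [← hlm]; exact (hmemF l).mp hl
      have hSma : S m ≤ a := by
        rw [haa, hS]
        apply Finset.sum_le_sum_of_subset_of_nonneg
        · intro j hj
          simp only [mem_filter, mem_univ, true_and] at hj ⊢
          exact hj.trans_lt hlt
        · intro i _ _; exact hμ i
      linarith
    · exact heq

/-- Conditionally on the generated token `y` (and the permutation `π`), the uniform
variable `u` driving inverse transform sampling is uniform on the interval
`(μ{z : π z < π y}, μ{z : π z ≤ π y}]`, whose length is `μ y`; in particular its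
conditional expectation is `μ y / 2 + μ{z : π z < π y}`. -/
theorem invTransform_cond_uniform {V : ℕ} [NeZero V] (π : Equiv.Perm (Fin V))
    (μp : Fin V → ℝ) (hμ : ∀ k, 0 ≤ μp k) (hsum : ∑ k, μp k = 1)
    (y : Fin V) (hy : 0 < μp y) :
    ProbabilityTheory.cond (volume.restrict (Set.Icc (0:ℝ) 1))
        {u | invTransform π μp u = y}
      = ProbabilityTheory.cond volume
          (Set.Ioc (∑ z ∈ Finset.univ.filter fun z : Fin V => π z < π y, μp z)
            ((∑ z ∈ Finset.univ.filter fun z : Fin V => π z < π y, μp z) + μp y))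
    ∧ (∫ u, u ∂(ProbabilityTheory.cond (volume.restrict (Set.Icc (0:ℝ) 1))
          {u | invTransform π μp u = y}))
        = μp y / 2 + ∑ z ∈ Finset.univ.filter fun z : Fin V => π z < π y, μp z := by
  set a : ℝ := ∑ z ∈ Finset.univ.filter fun z : Fin V => π z < π y, μp z with haa
  have ha0 : 0 ≤ a := Finset.sum_nonneg fun i _ => hμ i
  have hb1 : a + μp y ≤ 1 := by
    have h1 : a + μp y = ∑ j ∈ univ.filter fun j : Fin V => π j ≤ π y, μp j := by
      have h2 : (univ.filter fun j : Fin V => π j ≤ π y)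
          = insert y (univ.filter fun j : Fin V => π j < π y) := by
        ext j
        simp only [mem_filter, mem_univ, true_and, mem_insert]
        constructor
        · intro h
          rcases lt_or_eq_of_le h with h' | h'
          · exact Or.inr h'
          · exact Or.inl (π.injective h')
        · rintro (rfl | h)
          · exact le_rfl
          · exact le_of_lt h
      rw [h2, Finset.sum_insert (by simp), haa]
      ring
    rw [h1, ← hsum]
    apply Finset.sum_le_sum_of_subset_of_nonneg (Finset.filter_subset _ _)
    intro i _ _; exact hμ i
  -- the key set identity
  have hset : {u : ℝ | invTransform π μp u = y} ∩ Set.Ioc 0 1 = Set.Ioc a (a + μp y) := by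
    ext u
    simp only [Set.mem_inter_iff, Set.mem_setOf_eq, Set.mem_Ioc]
    constructor
    · rintro ⟨h, hu, hu1⟩
      exact (invTransform_eq_iff π μp hμ hsum y hu hu1).mp h
    · rintro ⟨hau, hub⟩
      have hu : 0 < u := lt_of_le_of_lt ha0 hau
      have hu1 : u ≤ 1 := hub.trans hb1
      exact ⟨(invTransform_eq_iff π μp hμ hsum y hu hu1).mpr ⟨hau, hub⟩, hu, hu1⟩
  have hae : ({u : ℝ | invTransform π μp u = y} ∩ Set.Icc 0 1 : Set ℝ)
      =ᵐ[volume] (Set.Ioc a (a + μp y) : Set ℝ) := by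
    have h1 : (Set.Icc (0:ℝ) 1 : Set ℝ) =ᵐ[volume] (Set.Ioc 0 1 : Set ℝ) :=
      MeasureTheory.Ioc_ae_eq_Icc.symm
    rw [← hset]
    exact Filter.EventuallyEq.inter (Filter.EventuallyEq.refl _ _) h1
  have hcond : ProbabilityTheory.cond (volume.restrict (Set.Icc (0:ℝ) 1))
      {u | invTransform π μp u = y}
      = ProbabilityTheory.cond volume (Set.Ioc a (a + μp y)) := by
    rw [ProbabilityTheory.cond, ProbabilityTheory.cond]
    rw [Measure.restrict_apply' measurableSet_Icc,
      Measure.restrict_restrict' measurableSet_Icc,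
      measure_congr hae, Measure.restrict_congr_set hae]
  refine ⟨hcond, ?_⟩
  rw [hcond, ProbabilityTheory.cond]
  rw [integral_smul_measure]
  have hvol : volume (Set.Ioc a (a + μp y)) = ENNReal.ofReal (μp y) := by
    rw [Real.volume_Ioc]; ring_nf
  rw [hvol]
  have hint : (∫ u in Set.Ioc a (a + μp y), u) = ((a + μp y)^2 - a^2) / 2 := by
    rw [← intervalIntegral.integral_of_le (by linarith)]
    simp [integral_id]
  rw [hint]
  have htor : (ENNReal.ofReal (μp y))⁻¹.toReal = (μp y)⁻¹ := by
    rw [ENNReal.toReal_inv, ENNReal.toReal_ofReal hy.le]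
  rw [htor, smul_eq_mul]
  field_simp
  ring
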